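/- Let H be a real Hilbert space and Q = Q₁ + Q₂ a bounded linear operator on H, where Q₁ is a bounded positive operator (i.e. ⟨Q₁ v, v⟩ > 0 for every v ≠ 0) and Q₂ is a bounded self-adjoint operator that vanishes on a finite-dimensional subspace V₁ ⊆ H (Q₂ v = 0 for all v ∈ V₁) and is coercive on V₂ = V₁^⊥ (there exists c₂ > 0 with ⟨Q₂ v, v⟩ ≥ c₂‖v‖² for all v ∈ V₂). Then Q is coercive on H: there exists c > 0 such that ⟨Q v, v⟩ ≥ c‖v‖² for all v ∈ H. -/

import Mathlib

open RealInnerProductSpace ContinuousLinearMap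

/-- On a finite-dimensional subspace, a positive operator is uniformly positive. -/
lemma aux_min_pos
    {H : Type*} [NormedAddCommGroup H] [InnerProductSpace ℝ H]
    (T : H →L[ℝ] H)
    (hT : ∀ v : H, v ≠ 0 → 0 < ⟪T v, v⟫)
    (V : Submodule ℝ H) [FiniteDimensional ℝ V] :
    ∃ m > 0, ∀ a ∈ V, m * ‖a‖^2 ≤ ⟪T a, a⟫ := by
  rcases subsingleton_or_nontrivial V with hV | hV
  · refine ⟨1, one_pos, fun a ha => ?_⟩
    have : (⟨a, ha⟩ : V) = 0 := Subsingleton.elim _ _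
    have ha0 : a = 0 := congrArg Subtype.val this
    simp [ha0]
  · obtain ⟨x, hx⟩ := exists_ne (0 : V)
    have hnx : ‖x‖ ≠ 0 := norm_ne_zero_iff.mpr hx
    have hsph : (Metric.sphere (0 : V) 1).Nonempty := by
      refine ⟨(‖x‖⁻¹ : ℝ) • x, ?_⟩
      rw [mem_sphere_zero_iff_norm, norm_smul, norm_inv, norm_norm]
      exact inv_mul_cancel₀ hnx
    have hcont : Continuous fun a : V => ⟪T (a : H), (a : H)⟫ :=
      Continuous.inner (T.continuous.comp continuous_subtype_val) continuous_subtype_val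
    obtain ⟨a₀, ha₀mem, ha₀min⟩ :=
      (isCompact_sphere (0 : V) 1).exists_isMinOn hsph hcont.continuousOn
    have ha₀norm : ‖(a₀ : H)‖ = 1 := by
      simpa using mem_sphere_zero_iff_norm.mp ha₀mem
    have ha₀ne : (a₀ : H) ≠ 0 := by
      intro h; rw [h] at ha₀norm; simp at ha₀norm
    refine ⟨⟪T (a₀ : H), (a₀ : H)⟫, hT _ ha₀ne, fun a ha => ?_⟩
    by_cases h0 : a = 0
    · simp [h0]
    · have hna : ‖a‖ ≠ 0 := norm_ne_zero_iff.mpr h0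
      have humem : ((‖a‖⁻¹ : ℝ) • ⟨a, ha⟩ : V) ∈ Metric.sphere (0 : V) 1 := by
        rw [mem_sphere_zero_iff_norm, norm_smul, norm_inv, norm_norm]
        have hco : ‖(⟨a, ha⟩ : V)‖ = ‖a‖ := rfl
        rw [hco]
        exact inv_mul_cancel₀ hna
      have hle : ⟪T (((‖a‖⁻¹ : ℝ) • ⟨a, ha⟩ : V) : H), (((‖a‖⁻¹ : ℝ) • ⟨a, ha⟩ : V) : H)⟫
          ≥ ⟪T (a₀ : H), (a₀ : H)⟫ := ha₀min humem
      have huval : (((‖a‖⁻¹ : ℝ) • ⟨a, ha⟩ : V) : H) = (‖a‖⁻¹ : ℝ) • a := rfl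
      rw [huval, map_smul, real_inner_smul_left, real_inner_smul_right] at hle
      have hscale : ⟪T (a₀ : H), (a₀ : H)⟫ ≤ ‖a‖⁻¹ * (‖a‖⁻¹ * ⟪T a, a⟫) := hle
      have hpos : (0:ℝ) < ‖a‖ := norm_pos_iff.mpr h0
      calc ⟪T (a₀ : H), (a₀ : H)⟫ * ‖a‖^2
          ≤ (‖a‖⁻¹ * (‖a‖⁻¹ * ⟪T a, a⟫)) * ‖a‖^2 :=
            mul_le_mul_of_nonneg_right hscale (by positivity)
        _ = (‖a‖⁻¹ * ‖a‖) * (‖a‖⁻¹ * ‖a‖) * ⟪T a, a⟫ := by ring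
        _ = ⟪T a, a⟫ := by rw [inv_mul_cancel₀ hna]; ring

lemma aux_delta (M m : ℝ) (hM : 0 ≤ M) (hm : 0 < m) :
    ∃ δ : ℝ, 0 < δ ∧ δ ≤ 1/2 ∧ 2 * M * δ ≤ m / 2 := by
  refine ⟨min (1/2) (m / (4 * (M + 1))), lt_min (by norm_num) (by positivity),
    min_le_left _ _, ?_⟩
  have h1 : min (1/2) (m / (4 * (M + 1))) ≤ m / (4 * (M + 1)) := min_le_right _ _
  have h2 : 2 * M * min (1/2) (m / (4 * (M + 1))) ≤ 2 * M * (m / (4 * (M + 1))) :=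
    mul_le_mul_of_nonneg_left h1 (by positivity)
  have h4 : 2 * M * (m / (4 * (M + 1))) = (2 * M * m) / (4 * (M + 1)) := by ring
  have h3 : (2 * M * m) / (4 * (M + 1)) ≤ m / 2 := by
    rw [div_le_div_iff₀ (by positivity) (by norm_num)]
    nlinarith
  linarith

set_option maxHeartbeats 1000000 in
/-- Coercivity lemma: if Q = Q₁ + Q₂ with Q₁ positive and Q₂ self-adjoint,
vanishing on a finite-dimensional subspace V₁ and coercive on V₁ᗮ, then Q is
coercive on H. -/
theorem positive_plus_coercive_is_coercive
    {H : Type*} [NormedAddCommGroup H] [InnerProductSpace ℝ H] [CompleteSpace H]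
    (Q₁ Q₂ : H →L[ℝ] H)
    (hQ₁pos : ∀ v : H, v ≠ 0 → 0 < ⟪Q₁ v, v⟫)
    (hQ₂sa : IsSelfAdjoint Q₂)
    (V₁ : Submodule ℝ H) [FiniteDimensional ℝ V₁]
    (hker : ∀ v ∈ V₁, Q₂ v = 0)
    (c₂ : ℝ) (hc₂ : 0 < c₂)
    (hcoer : ∀ v ∈ V₁ᗮ, c₂ * ‖v‖^2 ≤ ⟪Q₂ v, v⟫) :
    ∃ c > 0, ∀ v : H, c * ‖v‖^2 ≤ ⟪(Q₁ + Q₂) v, v⟫ := by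
  obtain ⟨m, hm, hmin⟩ := aux_min_pos Q₁ hQ₁pos V₁
  obtain ⟨δ, hδpos, hδhalf, hδM⟩ := aux_delta ‖Q₁‖ m (norm_nonneg _) hm
  refine ⟨min (c₂ * δ^2) (m / 4), lt_min (by positivity) (by positivity), fun v => ?_⟩
  -- decompose v
  obtain ⟨a, haV, b, hbV, hvab⟩ : ∃ a ∈ V₁, ∃ b ∈ V₁ᗮ, v = a + b :=
    ⟨(V₁.orthogonalProjectionOnto v : H), Submodule.coe_mem _,
     v - (V₁.orthogonalProjectionOnto v : H), V₁.sub_starProjection_mem_orthogonal v,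
     by abel⟩
  have hab : ⟪a, b⟫ = 0 := hbV a haV
  have hba : ⟪b, a⟫ = 0 := by rw [real_inner_comm]; exact hab
  have hnorm : ‖v‖^2 = ‖a‖^2 + ‖b‖^2 := by
    rw [hvab, ← real_inner_self_eq_norm_sq, inner_add_add_self, hab, hba,
      real_inner_self_eq_norm_sq, real_inner_self_eq_norm_sq]
    ring
  -- Q₂ part
  have hQ₂a : Q₂ a = 0 := hker a haV
  have hQ₂v : ⟪Q₂ v, v⟫ = ⟪Q₂ b, b⟫ := by
    have hQ₂ba : ⟪Q₂ b, a⟫ = 0 := by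
      calc ⟪Q₂ b, a⟫ = ⟪b, Q₂ a⟫ := hQ₂sa.isSymmetric b a
        _ = 0 := by rw [hQ₂a, inner_zero_right]
    rw [hvab, map_add, hQ₂a, zero_add, inner_add_right, hQ₂ba, zero_add]
  have hQ₂b : c₂ * ‖b‖^2 ≤ ⟪Q₂ b, b⟫ := hcoer b hbV
  -- Q₁ nonneg
  have hQ₁nn : ∀ w : H, 0 ≤ ⟪Q₁ w, w⟫ := fun w => by
    by_cases h : w = 0
    · simp [h]
    · exact (hQ₁pos w h).le
  have key : ⟪(Q₁ + Q₂) v, v⟫ = ⟪Q₁ v, v⟫ + ⟪Q₂ b, b⟫ := by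
    rw [add_apply, inner_add_left, hQ₂v]
  by_cases hcase : δ * ‖v‖ ≤ ‖b‖
  · -- orthogonal part dominant
    have h1 : c₂ * (δ * ‖v‖)^2 ≤ c₂ * ‖b‖^2 := by
      apply mul_le_mul_of_nonneg_left _ hc₂.le
      apply pow_le_pow_left₀ (by positivity) hcase
    calc min (c₂ * δ^2) (m / 4) * ‖v‖^2
        ≤ c₂ * δ^2 * ‖v‖^2 :=
          mul_le_mul_of_nonneg_right (min_le_left _ _) (by positivity)
      _ = c₂ * (δ * ‖v‖)^2 := by ring
      _ ≤ c₂ * ‖b‖^2 := h1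
      _ ≤ ⟪Q₂ b, b⟫ := hQ₂b
      _ ≤ ⟪Q₁ v, v⟫ + ⟪Q₂ b, b⟫ := by linarith [hQ₁nn v]
      _ = ⟪(Q₁ + Q₂) v, v⟫ := key.symm
  · push_neg at hcase
    have hbsmall : ‖b‖ ≤ δ * ‖v‖ := hcase.le
    have hav : ‖a‖ ≤ ‖v‖ := by nlinarith [norm_nonneg a, norm_nonneg b, norm_nonneg v]
    have hQ₁v : ⟪Q₁ v, v⟫ = ⟪Q₁ a, a⟫ + ⟪Q₁ a, b⟫ + ⟪Q₁ b, a⟫ + ⟪Q₁ b, b⟫ := by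
      rw [hvab, map_add, inner_add_left, inner_add_right, inner_add_right]; ring
    have hcs1 : |⟪Q₁ a, b⟫| ≤ ‖Q₁‖ * ‖a‖ * ‖b‖ := by
      calc |⟪Q₁ a, b⟫| ≤ ‖Q₁ a‖ * ‖b‖ := abs_real_inner_le_norm _ _
        _ ≤ ‖Q₁‖ * ‖a‖ * ‖b‖ :=
          mul_le_mul_of_nonneg_right (Q₁.le_opNorm a) (norm_nonneg b)
    have hcs2 : |⟪Q₁ b, a⟫| ≤ ‖Q₁‖ * ‖a‖ * ‖b‖ := by
      calc |⟪Q₁ b, a⟫| ≤ ‖Q₁ b‖ * ‖a‖ := abs_real_inner_le_norm _ _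
        _ ≤ ‖Q₁‖ * ‖a‖ * ‖b‖ := by
          have := Q₁.le_opNorm b
          nlinarith [norm_nonneg a, norm_nonneg b]
    have hQ₁low : m * ‖a‖^2 - 2 * (‖Q₁‖ * ‖a‖ * ‖b‖) ≤ ⟪Q₁ v, v⟫ := by
      have h0 := hmin a haV
      have h1 := abs_le.mp hcs1
      have h2 := abs_le.mp hcs2
      have h3 := hQ₁nn b
      rw [hQ₁v]; linarith
    have habδ : ‖Q₁‖ * ‖a‖ * ‖b‖ ≤ ‖Q₁‖ * δ * ‖v‖^2 := by
      have h5 : ‖a‖ * ‖b‖ ≤ ‖v‖ * (δ * ‖v‖) :=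
        mul_le_mul hav hbsmall (norm_nonneg b) (norm_nonneg v)
      nlinarith [norm_nonneg Q₁]
    have hasq : (1 - δ^2) * ‖v‖^2 ≤ ‖a‖^2 := by
      have : ‖b‖^2 ≤ δ^2 * ‖v‖^2 := by nlinarith [norm_nonneg b, norm_nonneg v]
      nlinarith
    have hδsq : δ^2 ≤ 1/4 := by nlinarith
    calc min (c₂ * δ^2) (m / 4) * ‖v‖^2
        ≤ m / 4 * ‖v‖^2 :=
          mul_le_mul_of_nonneg_right (min_le_right _ _) (by positivity)
      _ ≤ m * (1 - δ^2) * ‖v‖^2 - 2 * (‖Q₁‖ * δ * ‖v‖^2) := by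
          have h7 : m / 4 ≤ m * (1 - δ^2) - 2 * (‖Q₁‖ * δ) := by nlinarith
          have h8 := mul_le_mul_of_nonneg_right h7 (sq_nonneg ‖v‖)
          nlinarith [h8]
      _ ≤ m * ‖a‖^2 - 2 * (‖Q₁‖ * ‖a‖ * ‖b‖) := by
          have h6 : m * ((1 - δ^2) * ‖v‖^2) ≤ m * ‖a‖^2 :=
            mul_le_mul_of_nonneg_left hasq hm.le
          nlinarith [h6, habδ]
      _ ≤ ⟪Q₁ v, v⟫ := hQ₁low
      _ ≤ ⟪Q₁ v, v⟫ + ⟪Q₂ b, b⟫ := by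
          have hbnn : 0 ≤ ⟪Q₂ b, b⟫ := le_trans (by positivity) hQ₂b
          linarith
      _ = ⟪(Q₁ + Q₂) v, v⟫ := key.symm
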